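/- Let X ⊆ A^ℤ be an infinite transitive subshift and let w = w₁⋯wₙ ∈ L(X) be deterministic in X. Then all the symbols w₁, …, wₙ are distinct. -/

import Mathlib

/-- The shift map on bi-infinite sequences. -/
def shiftMap {A : Type*} (x : ℤ → A) : ℤ → A := fun i => x (i + 1)

/-- The `k`-fold shift map (`σ^k`). -/
def shiftPow {A : Type*} (k : ℤ) (x : ℤ → A) : ℤ → A := fun i => x (i + k)

/-- A subshift: a closed shift-invariant subset of `A^ℤ`. -/
def IsSubshift {A : Type*} [TopologicalSpace A] (X : Set (ℤ → A)) : Prop :=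
  IsClosed X ∧ shiftMap '' X = X

/-- The word `w` occurs in `x` at position `i`. -/
def occursAt {A : Type*} (x : ℤ → A) (w : List A) (i : ℤ) : Prop :=
  ∀ (k : ℕ) (hk : k < w.length), x (i + k) = w.get ⟨k, hk⟩

/-- `w` belongs to the language of `X`. -/
def InLang {A : Type*} (X : Set (ℤ → A)) (w : List A) : Prop :=
  ∃ x ∈ X, occursAt x w 0

/-- The set of contexts of a word with respect to `X`. -/
def contexts {A : Type*} (X : Set (ℤ → A)) (w : List A) : Set (List A × List A) :=
  {p | InLang X (p.1 ++ w ++ p.2)}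

/-- `w` is a synchronizing word of `X`. -/
def IsSynchronizing {A : Type*} (X : Set (ℤ → A)) (w : List A) : Prop :=
  InLang X w ∧ ∀ u v : List A, InLang X (u ++ w) → InLang X (w ++ v) → InLang X (u ++ w ++ v)

/-- `X` is a transitive subshift. -/
def IsTransitiveSubshift {A : Type*} (X : Set (ℤ → A)) : Prop :=
  ∀ u v : List A, InLang X u → InLang X v → ∃ w : List A, InLang X (u ++ w ++ v)

/-- A reversible cellular automaton (automorphism) of the subshift `X`. -/
def IsAutomorphism {A : Type*} [TopologicalSpace A] (X : Set (ℤ → A))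
    (F : (ℤ → A) → (ℤ → A)) : Prop :=
  Set.MapsTo F X X ∧ ContinuousOn F X ∧ (∀ x ∈ X, F (shiftMap x) = shiftMap (F x)) ∧
  ∃ G : (ℤ → A) → (ℤ → A), Set.MapsTo G X X ∧ ContinuousOn G X ∧
    (∀ x ∈ X, G (shiftMap x) = shiftMap (G x)) ∧
    (∀ x ∈ X, G (F x) = x) ∧ (∀ x ∈ X, F (G x) = x)

/-- `F` is given on `X` by a local rule of radius `r`. -/
def HasRadius {A : Type*} (X : Set (ℤ → A)) (F : (ℤ → A) → (ℤ → A)) (r : ℕ) : Prop :=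
  ∃ f : (Fin (2 * r + 1) → A) → A, ∀ x ∈ X, ∀ i : ℤ, F x i = f (fun k => x (i - r + k))

/-- `x` is an equicontinuity point of `(X, F)` (combinatorial formulation). -/
def IsEquicontinuityPoint {A : Type*} (X : Set (ℤ → A)) (F : (ℤ → A) → (ℤ → A))
    (x : ℤ → A) : Prop :=
  x ∈ X ∧ ∀ N : ℕ, ∃ M : ℕ, ∀ y ∈ X, (∀ j : ℤ, |j| ≤ (M : ℤ) → y j = x j) →
    ∀ t : ℕ, ∀ j : ℤ, |j| ≤ (N : ℤ) → F^[t] y j = F^[t] x j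

section Aux2
variable {A : Type*} [TopologicalSpace A] {X : Set (ℤ → A)}

lemma getCongr (w : List A) {m1 m2 : ℕ} (h1 : m1 < w.length) (h : m1 = m2) :
    w.get ⟨m1, h1⟩ = w.get ⟨m2, h ▸ h1⟩ := by subst h; rfl

lemma memShift (hX : IsSubshift X) {x : ℤ → A} (hx : x ∈ X) (k : ℤ) :
    (fun s => x (s + k)) ∈ X := by
  induction k using Int.induction_on with
  | zero => simpa using hx
  | succ k ih =>
    have h2 : shiftMap (fun s => x (s + k)) ∈ X := by
      rw [← hX.2]; exact Set.mem_image_of_mem _ ih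
    have : shiftMap (fun s => x (s + (k:ℤ))) = fun s => x (s + ((k:ℤ) + 1)) := by
      funext s; simp [shiftMap]; ring_nf
    rwa [this] at h2
  | pred k ih =>
    rw [← hX.2] at ih
    obtain ⟨z, hz, hze⟩ := ih
    have hzz : z = fun s => x (s + (-(k:ℤ) - 1)) := by
      funext s
      have h3 := congrFun hze (s - 1)
      simp [shiftMap] at h3
      rw [h3]; ring_nf
    exact hzz ▸ hz

lemma pairLang (hX : IsSubshift X) {x : ℤ → A} (hx : x ∈ X) (t : ℤ) :
    InLang X [x t, x (t + 1)] := by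
  refine ⟨fun s => x (s + t), memShift hX hx t, ?_⟩
  intro k hk
  simp only [List.length_cons, List.length_nil] at hk
  interval_cases k
  · simp
  · simp; rw [add_comm]

lemma windowLang (hX : IsSubshift X) {x : ℤ → A} (hx : x ∈ X) (t : ℤ) (m : ℕ) :
    InLang X (List.ofFn (fun k : Fin m => x (t + k))) := by
  refine ⟨fun s => x (s + t), memShift hX hx t, ?_⟩
  intro k hk
  simp only [List.length_ofFn] at hk
  simp only [List.get_ofFn]
  simp
  rw [add_comm]

lemma emodAddEq (p a b a' b' : ℤ) (ha : a % p = a' % p) (hb : b % p = b' % p) :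
    (a + b) % p = (a' + b') % p := by
  rw [Int.add_emod, ha, hb, ← Int.add_emod]

lemma emodSubEq (p a b a' b' : ℤ) (ha : a % p = a' % p) (hb : b % p = b' % p) :
    (a - b) % p = (a' - b') % p := by
  rw [Int.sub_emod, ha, hb, ← Int.sub_emod]

lemma negOneEmod (p : ℤ) (hp : 0 < p) : (-1 : ℤ) % p = p - 1 := by
  have h1 : (-1 + p * 1) % p = (-1 : ℤ) % p := Int.add_mul_emod_self_left (a := -1) (b := p) (c := 1)
  have h2 : (-1 + p * 1 : ℤ) = p - 1 := by ring
  rw [h2] at h1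
  rw [← h1]
  exact Int.emod_eq_of_lt (by omega) (by omega)

end Aux2

/-- In an infinite transitive subshift, a word `w` all of whose symbols have
unique successors (at positions `< n`) and unique predecessors (at positions `> 1`) has all
its symbols distinct. -/
theorem stmt7 {A : Type*} [TopologicalSpace A] [DiscreteTopology A]
    (X : Set (ℤ → A)) (hX : IsSubshift X) (hinf : X.Infinite)
    (htrans : IsTransitiveSubshift X)
    (w : List A) (hw : InLang X w)
    (hfd : ∀ (i : ℕ) (hi : i + 1 < w.length), ∀ a : A,
      InLang X [w.get ⟨i, by omega⟩, a] → a = w.get ⟨i + 1, hi⟩)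
    (hpd : ∀ (i : ℕ) (hi : i + 1 < w.length), ∀ a : A,
      InLang X [a, w.get ⟨i + 1, hi⟩] → a = w.get ⟨i, by omega⟩) :
    w.Nodup := by
  by_contra hnd
  rw [List.nodup_iff_injective_get] at hnd
  rw [Function.Injective] at hnd
  push_neg at hnd
  obtain ⟨a, b, hab, hne⟩ := hnd
  obtain ⟨i, hi, j, hj, hij, hweq⟩ : ∃ (i : ℕ) (hi : i < w.length) (j : ℕ)
      (hj : j < w.length), i < j ∧ w.get ⟨i, hi⟩ = w.get ⟨j, hj⟩ := by
    rcases lt_trichotomy a.1 b.1 with h | h | h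
    · exact ⟨a.1, a.2, b.1, b.2, h, by simpa using hab⟩
    · exact absurd (Fin.ext h) hne
    · exact ⟨b.1, b.2, a.1, a.2, h, by simpa using hab.symm⟩
  set p := j - i with hpdef
  have hp0 : 0 < p := by omega
  have hpz : (p : ℤ) ≠ 0 := by positivity
  have hppos : (0 : ℤ) < p := by positivity
  have hem : ∀ s : ℤ, 0 ≤ s % (p : ℤ) ∧ s % (p : ℤ) < (p : ℤ) :=
    fun s => ⟨Int.emod_nonneg s hpz, Int.emod_lt_of_pos s hppos⟩
  have hc : ∀ s : ℤ, i + (s % (p : ℤ)).toNat < w.length := by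
    intro s; have := hem s; omega
  set C : ℤ → A := fun s => w.get ⟨i + (s % (p : ℤ)).toNat, hc s⟩ with hCdef
  have hCval : ∀ s : ℤ, C s = w.get ⟨i + (s % (p : ℤ)).toNat, hc s⟩ := fun s => rfl
  have hCcong : ∀ a b : ℤ, a % (p : ℤ) = b % (p : ℤ) → C a = C b := by
    intro a b h
    rw [hCval, hCval]
    exact getCongr w (hc a) (by rw [h])
  -- key: any point seeing symbol w_i at t is completely determined
  have hkey : ∀ x ∈ X, ∀ t : ℤ, x t = w.get ⟨i, hi⟩ → ∀ s : ℤ, x (t + s) = C s := by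
    intro x hx t ht s
    induction s using Int.induction_on with
    | zero =>
      rw [hCval]
      have h0 : (0 : ℤ) % (p : ℤ) = 0 := Int.zero_emod _
      rw [add_zero, ht]
      exact getCongr w hi (by rw [h0]; simp)
    | succ k ih =>
      have hr := hem (k : ℤ)
      have hpair := pairLang hX hx (t + (k : ℤ))
      rw [ih, hCval] at hpair
      by_cases hcase : ((k : ℤ) % (p : ℤ)).toNat + 1 < p
      · have hi1 : i + ((k : ℤ) % (p : ℤ)).toNat + 1 < w.length := by omega
        have h2 := hfd (i + ((k : ℤ) % (p : ℤ)).toNat) hi1 (x (t + (k : ℤ) + 1)) hpair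
        rw [show t + ((k : ℤ) + 1) = t + (k : ℤ) + 1 by ring, h2, hCval]
        apply getCongr
        have hmod : ((k : ℤ) + 1) % (p : ℤ) = (k : ℤ) % (p : ℤ) + 1 := by
          rw [emodAddEq (p : ℤ) (k : ℤ) 1 ((k : ℤ) % (p : ℤ)) 1
            (Int.emod_emod_of_dvd _ dvd_rfl).symm rfl]
          exact Int.emod_eq_of_lt (by omega) (by omega)
        omega
      · have hreq : ((k : ℤ) % (p : ℤ)).toNat + 1 = p := by omega
        have hi1 : i + ((k : ℤ) % (p : ℤ)).toNat + 1 < w.length := by omega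
        have h2 := hfd (i + ((k : ℤ) % (p : ℤ)).toNat) hi1 (x (t + (k : ℤ) + 1)) hpair
        have h3 : w.get ⟨i + ((k : ℤ) % (p : ℤ)).toNat + 1, hi1⟩ = w.get ⟨i, hi⟩ := by
          rw [getCongr w hi1 (show i + ((k : ℤ) % (p : ℤ)).toNat + 1 = j by omega)]
          exact hweq.symm
        have hmod : ((k : ℤ) + 1) % (p : ℤ) = 0 := by
          rw [emodAddEq (p : ℤ) (k : ℤ) 1 ((k : ℤ) % (p : ℤ)) 1
            (Int.emod_emod_of_dvd _ dvd_rfl).symm rfl]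
          rw [show (k : ℤ) % (p : ℤ) + 1 = (p : ℤ) by omega]
          exact Int.emod_self
        rw [show t + ((k : ℤ) + 1) = t + (k : ℤ) + 1 by ring, h2, h3, hCval]
        apply getCongr
        omega
    | pred k ih =>
      have hr := hem (-(k : ℤ))
      have hpair := pairLang hX hx (t + -(k : ℤ) - 1)
      rw [show t + -(k : ℤ) - 1 + 1 = t + -(k : ℤ) by ring, ih] at hpair
      by_cases hcase : ((-(k : ℤ)) % (p : ℤ)).toNat = 0
      · have hj1 : (j - 1) + 1 < w.length := by omega
        have hsec : C (-(k : ℤ)) = w.get ⟨(j - 1) + 1, hj1⟩ := by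
          rw [hCval, getCongr w (hc _) (show i + ((-(k : ℤ)) % (p : ℤ)).toNat = i by omega),
            hweq]
          exact getCongr w hj (by omega)
        rw [hsec] at hpair
        have h2 := hpd (j - 1) hj1 (x (t + -(k : ℤ) - 1)) hpair
        have hz0 : (-(k : ℤ)) % (p : ℤ) = 0 := by omega
        have hmod : (-(k : ℤ) - 1) % (p : ℤ) = (p : ℤ) - 1 := by
          rw [emodSubEq (p : ℤ) (-(k : ℤ)) 1 0 1 (by rw [hz0, Int.zero_emod]) rfl]
          rw [show (0 : ℤ) - 1 = -1 by ring]
          exact negOneEmod _ hppos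
        rw [show t + (-(k : ℤ) - 1) = t + -(k : ℤ) - 1 by ring, h2, hCval]
        apply getCongr
        omega
      · have hi1 : (i + ((-(k : ℤ)) % (p : ℤ)).toNat - 1) + 1 < w.length := by omega
        have hsec : C (-(k : ℤ))
            = w.get ⟨(i + ((-(k : ℤ)) % (p : ℤ)).toNat - 1) + 1, hi1⟩ := by
          rw [hCval]
          exact getCongr w (hc _) (by omega)
        rw [hsec] at hpair
        have h2 := hpd (i + ((-(k : ℤ)) % (p : ℤ)).toNat - 1) hi1 (x (t + -(k : ℤ) - 1)) hpair
        have hmod : (-(k : ℤ) - 1) % (p : ℤ) = (-(k : ℤ)) % (p : ℤ) - 1 := by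
          rw [emodSubEq (p : ℤ) (-(k : ℤ)) 1 ((-(k : ℤ)) % (p : ℤ)) 1
            (Int.emod_emod_of_dvd _ dvd_rfl).symm rfl]
          exact Int.emod_eq_of_lt (by omega) (by omega)
        rw [show t + (-(k : ℤ) - 1) = t + -(k : ℤ) - 1 by ring, h2, hCval]
        apply getCongr
        omega
  -- every window of every point matches C at some phase
  have hwin : ∀ x ∈ X, ∀ (t : ℤ) (m : ℕ), ∃ θ : ℤ, ∀ k : ℕ, k < m →
      x (t + (k : ℤ)) = C (θ + (k : ℤ)) := by
    intro x hx t m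
    obtain ⟨v, hv⟩ := htrans _ w (windowLang hX hx t m) hw
    obtain ⟨y, hy, hocc⟩ := hv
    set u := List.ofFn (fun k : Fin m => x (t + (k : ℤ))) with hudef
    have hulen : u.length = m := List.length_ofFn
    have hLlen : (u ++ v ++ w).length = u.length + v.length + w.length := by
      simp only [List.length_append]
    have hq : u.length + v.length + i < (u ++ v ++ w).length := by omega
    have hyq : y ((u.length + v.length + i : ℕ) : ℤ) = w.get ⟨i, hi⟩ := by
      have h5 := hocc (u.length + v.length + i) hq
      rw [zero_add] at h5
      rw [h5]
      have h6 : (u ++ v ++ w).get ⟨u.length + v.length + i, hq⟩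
          = (u ++ v ++ w)[u.length + v.length + i]'hq := rfl
      rw [h6, List.getElem_append_right (by simp only [List.length_append]; omega)]
      have h7 : u.length + v.length + i - (u ++ v).length = i := by
        simp only [List.length_append]; omega
      simp [List.get_eq_getElem, h7]
    have hys := hkey y hy _ hyq
    refine ⟨-((u.length + v.length + i : ℕ) : ℤ), ?_⟩
    intro k hk
    have hk' : k < u.length := by omega
    have h1 : x (t + (k : ℤ)) = u.get ⟨k, hk'⟩ := by
      show x (t + (k : ℤ)) = (List.ofFn (fun k : Fin m => x (t + (k : ℤ)))).get ⟨k, hk'⟩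
      rw [List.get_ofFn]
      simp
    have h2 : y (k : ℤ) = u.get ⟨k, hk'⟩ := by
      have hkL : k < (u ++ v ++ w).length := by omega
      have hkuv : k < (u ++ v).length := by simp only [List.length_append]; omega
      have h5 := hocc k hkL
      rw [zero_add] at h5
      rw [h5]
      have h6 : (u ++ v ++ w).get ⟨k, hkL⟩ = (u ++ v ++ w)[k]'hkL := rfl
      rw [h6, List.getElem_append_left hkuv, List.getElem_append_left hk']
      rfl
    have h3 := hys ((k : ℤ) - ((u.length + v.length + i : ℕ) : ℤ))
    rw [show ((u.length + v.length + i : ℕ) : ℤ)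
        + ((k : ℤ) - ((u.length + v.length + i : ℕ) : ℤ)) = (k : ℤ) by ring] at h3
    rw [h1, ← h2, h3]
    apply hCcong
    congr 1
    ring
  -- every point is p-periodic
  have hper : ∀ x ∈ X, ∀ t : ℤ, x (t + (p : ℤ)) = x t := by
    intro x hx t
    obtain ⟨θ, hθ⟩ := hwin x hx t (p + 1)
    have h0 := hθ 0 (by omega)
    have hpp := hθ p (by omega)
    rw [Nat.cast_zero, add_zero, add_zero] at h0
    rw [hpp, h0]
    apply hCcong
    rw [show θ + (p : ℤ) = θ + (p : ℤ) * 1 by ring]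
    exact Int.add_mul_emod_self_left (a := θ) (b := (p : ℤ)) (c := 1)
  have hper2 : ∀ x ∈ X, ∀ q t : ℤ, x (t + (p : ℤ) * q) = x t := by
    intro x hx q
    induction q using Int.induction_on with
    | zero => intro t; simp
    | succ k ih =>
      intro t
      rw [show t + (p : ℤ) * ((k : ℤ) + 1) = t + (p : ℤ) * (k : ℤ) + (p : ℤ) by ring,
        hper x hx, ih]
    | pred k ih =>
      intro t
      have h1 := hper x hx (t + (p : ℤ) * (-(k : ℤ) - 1))
      rw [show t + (p : ℤ) * (-(k : ℤ) - 1) + (p : ℤ) = t + (p : ℤ) * (-(k : ℤ)) by ring] at h1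
      rw [show t + (p : ℤ) * (-(k : ℤ) - 1) = t + (p : ℤ) * (-(k : ℤ) - 1) by rfl]
      rw [← h1]
      exact ih t
  -- X is contained in a finite set
  have hXsub : X ⊆ Set.range (fun θ : Fin p => fun s : ℤ => C ((θ : ℕ) + s)) := by
    intro x hx
    obtain ⟨θ, hθ⟩ := hwin x hx 0 p
    have hθem := hem θ
    refine ⟨⟨(θ % (p : ℤ)).toNat, by omega⟩, ?_⟩
    funext s
    have hsem := hem s
    have h1 : x s = x (s % (p : ℤ)) := by
      have h5 := hper2 x hx (s / (p : ℤ)) (s % (p : ℤ))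
      rw [show s % (p : ℤ) + (p : ℤ) * (s / (p : ℤ)) = s from Int.emod_add_mul_ediv s _] at h5
      exact h5
    have h2 : x (s % (p : ℤ)) = C (θ + s % (p : ℤ)) := by
      have h5 := hθ (s % (p : ℤ)).toNat (by omega)
      rw [zero_add, Int.toNat_of_nonneg (hsem.1)] at h5
      exact h5
    have h3 : C (θ + s % (p : ℤ)) = C ((((θ % (p : ℤ)).toNat : ℕ) : ℤ) + s) := by
      apply hCcong
      apply emodAddEq
      · rw [Int.toNat_of_nonneg (hθem.1)]
        exact (Int.emod_emod_of_dvd _ dvd_rfl).symm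
      · exact Int.emod_emod_of_dvd _ dvd_rfl
    exact (h1.trans (h2.trans h3)).symm
  exact hinf ((Set.finite_range _).subset hXsub)
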